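/- Let S be an ultimately periodic sequence over F_q with preperiod t and linear complexity L whose generating function is G(x) = f(x)/g(x) with deg(f) < L, deg(g) = L − t, gcd(f,g) = 1, gcd(g(x), x) = 1, and G not identically zero. Let h(x,y) ∈ F_q[x,y] be a nonzero polynomial of degree d in y, and put H(x) = g(x)^d · h(x, G(x)). If H(x) is the zero polynomial, then the total degree of h satisfies deg(h) ≥ L − t + 1. -/

import Mathlib

/-- The `N`-th linear complexity of a sequence `s` over a field: the length of a
shortest linear recurrence satisfied by the first `N` terms. -/
noncomputable def linComplexityN {F : Type*} [Field F] (s : ℕ → F) (N : ℕ) : ℕ :=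
  sInf {L | ∃ c : Fin L → F, ∀ i, i + L < N →
    s (i + L) + ∑ ℓ : Fin L, c ℓ * s (i + ℓ.1) = 0}

open Classical in
/-- The `N`-th expansion complexity of a sequence `s` over a field: `0` if the first
`N` terms vanish, otherwise the least total degree of a nonzero bivariate polynomial
`h(x,y)` with `h(x, G(x)) ≡ 0 mod x^N`, where `G` is the generating function of `s`. -/
noncomputable def expComplexityN {F : Type*} [Field F] (s : ℕ → F) (N : ℕ) : ℕ :=
  if ∀ i < N, s i = 0 then 0 else
  sInf {d | ∃ h : MvPolynomial (Fin 2) F, h ≠ 0 ∧ h.totalDegree = d ∧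
    (PowerSeries.X : PowerSeries F) ^ N ∣
      MvPolynomial.aeval ![(PowerSeries.X : PowerSeries F), PowerSeries.mk s] h}

noncomputable def psiF (F : Type*) [Field F] : MvPolynomial (Fin 1) F ≃ₐ[F] Polynomial F :=
  (MvPolynomial.finSuccEquiv F 0).trans
    (Polynomial.mapAlgEquiv (MvPolynomial.isEmptyAlgEquiv F (Fin 0)))

noncomputable def toPoly2 (F : Type*) [Field F] :
    MvPolynomial (Fin 2) F →ₐ[F] Polynomial (Polynomial F) :=
  (Polynomial.mapAlgHom (psiF F).toAlgHom).comp
    ((MvPolynomial.finSuccEquiv F 1).toAlgHom.comp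
      (MvPolynomial.rename (Equiv.swap (0 : Fin 2) 1)))

lemma toPoly2_apply {F : Type*} [Field F] (h : MvPolynomial (Fin 2) F) :
    toPoly2 F h = ((MvPolynomial.finSuccEquiv F 1
        (MvPolynomial.rename (Equiv.swap (0 : Fin 2) 1) h)).map (psiF F : MvPolynomial (Fin 1) F →+* Polynomial F)) := by
  rfl

lemma toPoly2_injective (F : Type*) [Field F] : Function.Injective (toPoly2 F) := by
  intro a b hab
  rw [toPoly2_apply, toPoly2_apply] at hab
  have h1 := Polynomial.map_injective _ (psiF F).injective hab
  have h2 := (MvPolynomial.finSuccEquiv F 1).injective h1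
  exact MvPolynomial.rename_injective _ (Equiv.swap (0 : Fin 2) 1).injective h2

lemma natDegree_psiF {F : Type*} [Field F] (a : MvPolynomial (Fin 1) F) :
    (psiF F a).natDegree ≤ a.totalDegree := by
  have : (psiF F a).natDegree = (MvPolynomial.finSuccEquiv F 0 a).natDegree := by
    show ((MvPolynomial.finSuccEquiv F 0 a).map _).natDegree = _
    exact Polynomial.natDegree_map_eq_of_injective
      (MvPolynomial.isEmptyAlgEquiv F (Fin 0)).injective _
  rw [this, MvPolynomial.natDegree_finSuccEquiv]
  exact MvPolynomial.degreeOf_le_totalDegree a 0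

lemma natDegree_toPoly2 {F : Type*} [Field F] (h : MvPolynomial (Fin 2) F) :
    (toPoly2 F h).natDegree = MvPolynomial.degreeOf 1 h := by
  rw [toPoly2_apply,
    Polynomial.natDegree_map_eq_of_injective (psiF F).injective,
    MvPolynomial.natDegree_finSuccEquiv]
  have := MvPolynomial.degreeOf_rename_of_injective
    (Equiv.swap (0 : Fin 2) 1).injective (p := h) 1
  simpa using this

lemma coeff_toPoly2 {F : Type*} [Field F] (h : MvPolynomial (Fin 2) F) (j : ℕ)
    (hne : (toPoly2 F h).coeff j ≠ 0) :
    ((toPoly2 F h).coeff j).natDegree + j ≤ h.totalDegree := by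
  rw [toPoly2_apply, Polynomial.coeff_map] at hne ⊢
  have hne' : (MvPolynomial.finSuccEquiv F 1
      (MvPolynomial.rename (Equiv.swap (0 : Fin 2) 1) h)).coeff j ≠ 0 := by
    intro h0; rw [h0] at hne; simp at hne
  calc (psiF F _).natDegree + j ≤ _ + j := Nat.add_le_add_right (natDegree_psiF _) j
    _ ≤ (MvPolynomial.rename (Equiv.swap (0 : Fin 2) 1) h).totalDegree :=
      MvPolynomial.totalDegree_coeff_finSuccEquiv_add_le _ j hne'
    _ ≤ h.totalDegree := MvPolynomial.totalDegree_rename_le _ h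

noncomputable def evalPS {F : Type*} [Field F] (G : PowerSeries F) :
    Polynomial (Polynomial F) →ₐ[F] PowerSeries F :=
  Polynomial.eval₂AlgHom (Polynomial.coeToPowerSeries.algHom (A := F)) G
    (fun _ => Commute.all _ _)

lemma eval_toPoly2 {F : Type*} [Field F] (G : PowerSeries F) (h : MvPolynomial (Fin 2) F) :
    evalPS G (toPoly2 F h) =
      MvPolynomial.aeval ![(PowerSeries.X : PowerSeries F), G] h := by
  have : (evalPS G).comp (toPoly2 F) =
      MvPolynomial.aeval ![(PowerSeries.X : PowerSeries F), G] := by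
    apply MvPolynomial.algHom_ext
    intro i
    fin_cases i
    · show evalPS G (toPoly2 F (MvPolynomial.X 0)) = _
      rw [toPoly2_apply]
      simp only [MvPolynomial.rename_X, Equiv.swap_apply_left, ← Fin.succ_zero_eq_one,
        MvPolynomial.finSuccEquiv_X_succ, Polynomial.map_C]
      have hx : (psiF F : MvPolynomial (Fin 1) F →+* Polynomial F) (MvPolynomial.X 0) = Polynomial.X := by
        simp [psiF, MvPolynomial.finSuccEquiv_X_zero, Polynomial.coe_mapAlgEquiv]
      rw [hx]
      simp [evalPS, Polynomial.eval₂AlgHom_apply, Polynomial.eval₂_C,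
        Polynomial.coeToPowerSeries.algHom_apply, PowerSeries.map_id]
    · show evalPS G (toPoly2 F (MvPolynomial.X 1)) = _
      rw [toPoly2_apply]
      simp only [MvPolynomial.rename_X, Equiv.swap_apply_right,
        MvPolynomial.finSuccEquiv_X_zero, Polynomial.map_X]
      simp [evalPS, Polynomial.eval₂AlgHom_apply, Polynomial.eval₂_X]

  exact DFunLike.congr_fun this h

theorem totalDegree_ge_of_H_eq_zero {F : Type*} [Field F] [Fintype F]
    (s : ℕ → F) (t T L : ℕ) (hT : 0 < T)
    (hper : ∀ i, s (i + t + T) = s (i + t)) (htL : t ≤ L)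
    (hL : (⨆ N, (linComplexityN s N : ℕ∞)) = (L : ℕ∞))
    (f g : Polynomial F)
    (hdf : f.natDegree < L) (hdg : g.natDegree = L - t)
    (hcop : IsCoprime f g) (hgx : g.coeff 0 ≠ 0)
    (hfg : PowerSeries.mk s * (g : PowerSeries F) = (f : PowerSeries F))
    (hGne : PowerSeries.mk s ≠ 0)
    (h : MvPolynomial (Fin 2) F) (hh : h ≠ 0)
    (hH : (g : PowerSeries F) ^ (MvPolynomial.degreeOf 1 h) *
        MvPolynomial.aeval ![(PowerSeries.X : PowerSeries F), PowerSeries.mk s] h = 0) :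
    L - t + 1 ≤ h.totalDegree := by
  set d := MvPolynomial.degreeOf 1 h with hd
  set G := PowerSeries.mk s with hG
  set Q := toPoly2 F h with hQdef
  have hQne : Q ≠ 0 := by
    intro h0
    exact hh (toPoly2_injective F (h0.trans (map_zero (toPoly2 F)).symm))
  have hQd : Q.natDegree = d := natDegree_toPoly2 h
  have had : Q.coeff d ≠ 0 := by
    rw [← hQd]
    have := Polynomial.leadingCoeff_ne_zero.mpr hQne
    rwa [Polynomial.leadingCoeff] at this
  have hEv : (g : PowerSeries F) ^ d * evalPS G Q = 0 := by
    rw [hQdef, eval_toPoly2]; exact hH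
  have hsum : evalPS G Q =
      ∑ j ∈ Finset.range (d + 1), ((Q.coeff j : Polynomial F) : PowerSeries F) * G ^ j := by
    rw [evalPS, Polynomial.eval₂AlgHom_apply, Polynomial.eval₂_eq_sum_range, hQd]
    refine Finset.sum_congr rfl fun j _ => ?_
    congr 1
  set P := ∑ j ∈ Finset.range (d + 1), Q.coeff j * f ^ j * g ^ (d - j) with hP
  have hPzero : P = 0 := by
    rw [← Polynomial.coe_eq_zero_iff]
    have key : ((P : Polynomial F) : PowerSeries F) = (g : PowerSeries F) ^ d * evalPS G Q := by
      rw [hsum, Finset.mul_sum, hP]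
      simp only [← Polynomial.coeToPowerSeries.ringHom_apply, map_sum, map_mul, map_pow]
      refine Finset.sum_congr rfl fun j hj => ?_
      have hj' : j ≤ d := Nat.lt_succ_iff.mp (Finset.mem_range.mp hj)
      have hgd : ((g : Polynomial F) : PowerSeries F) ^ d =
          ((g : Polynomial F) : PowerSeries F) ^ j *
            ((g : Polynomial F) : PowerSeries F) ^ (d - j) := by
        rw [← pow_add, Nat.add_sub_cancel' hj']
      rw [Polynomial.coeToPowerSeries.ringHom_apply, Polynomial.coeToPowerSeries.ringHom_apply,
        Polynomial.coeToPowerSeries.ringHom_apply, ← hfg, hgd]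
      ring
    rw [key, hEv]
  rcases Nat.eq_zero_or_pos d with hd0 | hdpos
  · exfalso
    apply had
    have h0 := hPzero
    rw [hP, hd0] at h0
    rw [hd0]
    simpa using h0
  · have hsplit : Q.coeff d * f ^ d = -∑ j ∈ Finset.range d, Q.coeff j * f ^ j * g ^ (d - j) := by
      have h0 := hPzero
      rw [hP, Finset.sum_range_succ] at h0
      simp only [Nat.sub_self, pow_zero, mul_one] at h0
      exact eq_neg_of_add_eq_zero_right h0
    have hgdvd : g ∣ Q.coeff d * f ^ d := by
      rw [hsplit]
      apply dvd_neg.mpr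
      refine Finset.dvd_sum fun j hj => ?_
      have hjd : j < d := Finset.mem_range.mp hj
      exact Dvd.dvd.mul_left (dvd_pow_self g (Nat.sub_ne_zero_of_lt hjd)) _
    have hgad : g ∣ Q.coeff d := (hcop.symm.pow_right).dvd_of_dvd_mul_right hgdvd
    have h1 : g.natDegree ≤ (Q.coeff d).natDegree := Polynomial.natDegree_le_of_dvd hgad had
    have h2 : (Q.coeff d).natDegree + d ≤ h.totalDegree := coeff_toPoly2 h d had
    omega
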